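/- Let n ≥ 5 be odd. In Sym(2n), the subgroup G₂₃₄ = ⟨t₂, t₃, t₄⟩ is isomorphic to ℤ₂ × Sym(5), where t₂ = ∏_{i=1}^{⌊(n-3)/2⌋}(2+2i,3+2i)(n+2+2i,n+3+2i), t₃ = (1,3)(2,4)(n+1,n+3)(n+2,n+4), t₄ = (1,2)(n+1,n+2)∏_{i=1}^{n-2}(2+i,n+2+i). -/

import Mathlib

open Equiv

/-- `t₁ = ∏_{i=0}^{⌊(n-2)/2⌋} (1+2i, 2+2i)(n+1+2i, n+2+2i)` in `Sym(2n)` (as a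
permutation of `ℕ`). -/
def t1 (n : ℕ) : Equiv.Perm ℕ :=
  ((List.range ((n - 2) / 2 + 1)).map
    (fun i => Equiv.swap (1 + 2*i) (2 + 2*i) * Equiv.swap (n+1+2*i) (n+2+2*i))).prod

/-- `t₂ = ∏_{i=1}^{⌊(n-3)/2⌋} (2+2i, 3+2i)(n+2+2i, n+3+2i)`. -/
def t2 (n : ℕ) : Equiv.Perm ℕ :=
  ((List.range ((n - 3) / 2)).map
    (fun j => Equiv.swap (2 + 2*(j+1)) (3 + 2*(j+1)) *
      Equiv.swap (n+2+2*(j+1)) (n+3+2*(j+1)))).prod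

/-- `t₃ = (1,3)(2,4)(n+1,n+3)(n+2,n+4)`. -/
def t3 (n : ℕ) : Equiv.Perm ℕ :=
  Equiv.swap 1 3 * Equiv.swap 2 4 * Equiv.swap (n+1) (n+3) * Equiv.swap (n+2) (n+4)

/-- `t₄ = (1,2)(n+1,n+2) ∏_{i=1}^{n-2} (2+i, n+2+i)`. -/
def t4 (n : ℕ) : Equiv.Perm ℕ :=
  Equiv.swap 1 2 * Equiv.swap (n+1) (n+2) *
    ((List.range (n - 2)).map (fun j => Equiv.swap (2 + (j+1)) (n+2+(j+1)))).prod

set_option maxHeartbeats 1600000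

namespace G234aux

lemma prod_fix (l : List (Perm ℕ)) (x : ℕ) (h : ∀ g ∈ l, g x = x) : l.prod x = x := by
  induction l with
  | nil => rfl
  | cons g l ih =>
    rw [List.prod_cons, Perm.mul_apply, ih (fun g hg => h g (List.mem_cons_of_mem _ hg)),
      h g List.mem_cons_self]

lemma prod_range_apply (f : ℕ → Perm ℕ) (N i x : ℕ) (hi : i < N)
    (h1 : ∀ j, j < N → j ≠ i → f j x = x) (h2 : ∀ j, j < N → j ≠ i → f j (f i x) = f i x) :
    ((List.range N).map f).prod x = f i x := by
  induction N with
  | zero => omega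
  | succ N ih =>
    rw [List.range_succ, List.map_append, List.prod_append]
    simp only [List.map_cons, List.map_nil, List.prod_cons, List.prod_nil, mul_one,
      Perm.mul_apply]
    rcases eq_or_ne i N with rfl | hne
    · refine prod_fix _ _ ?_
      intro g hg
      obtain ⟨j, hj, rfl⟩ := List.mem_map.mp hg
      have hj' := List.mem_range.mp hj
      exact h2 j (by omega) (by omega)
    · rw [h1 N (Nat.lt_succ_self N) (Ne.symm hne)]
      exact ih (by omega) (fun j hj hji => h1 j (by omega) hji)
        (fun j hj hji => h2 j (by omega) hji)

variable (k : ℕ)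

/-- factor of t2 -/
def Fk (j : ℕ) : Perm ℕ := swap (4+2*j) (5+2*j) * swap (2*k+9+2*j) (2*k+10+2*j)

/-- tail of t2 : pairwise swaps of blocks 6..2k+5 (both halves) -/
def C : Perm ℕ := ((List.range k).map (fun j => Fk k (j+1))).prod

/-- factor of t4 -/
def Dsw (j : ℕ) : Perm ℕ := swap (3+j) (2*k+8+j)

/-- flip of blocks 3..2k+5 -/
def D : Perm ℕ := ((List.range (2*k+3)).map (Dsw k)).prod

def w (i : ℕ) : Perm ℕ := swap i (2*k+5+i)

def u : Perm ℕ := w k 2 * (w k 4 * w k 5)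

def z : Perm ℕ := w k 1 * (w k 2 * (D k * C k))

lemma Fk_fix {j x : ℕ} (h1 : x ≠ 4+2*j) (h2 : x ≠ 5+2*j) (h3 : x ≠ 2*k+9+2*j)
    (h4 : x ≠ 2*k+10+2*j) : Fk k j x = x := by
  rw [Fk, Perm.mul_apply, swap_apply_of_ne_of_ne h3 h4, swap_apply_of_ne_of_ne h1 h2]

lemma C_fix {x : ℕ} (h : x ≤ 5 ∨ (2*k+6 ≤ x ∧ x ≤ 2*k+10) ∨ 4*k+11 ≤ x) : C k x = x := by
  refine prod_fix _ _ ?_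
  intro g hg
  obtain ⟨j, hj, rfl⟩ := List.mem_map.mp hg
  have hj' := List.mem_range.mp hj
  exact Fk_fix k (by omega) (by omega) (by omega) (by omega)

lemma C_apply {j x y : ℕ} (hj : j < k)
    (hxy : (x = 6+2*j ∧ y = 7+2*j) ∨ (x = 7+2*j ∧ y = 6+2*j) ∨
      (x = 2*k+11+2*j ∧ y = 2*k+12+2*j) ∨ (x = 2*k+12+2*j ∧ y = 2*k+11+2*j)) :
    C k x = y := by
  rw [C, prod_range_apply _ k j x hj ?h1 ?h2]
  case h1 =>
    intro j' _ hne
    exact Fk_fix k (by omega) (by omega) (by omega) (by omega)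
  case h2 =>
    intro j' hj' hne
    refine Fk_fix k ?_ ?_ ?_ ?_ <;>
    · rw [Fk, Perm.mul_apply, swap_apply_def, swap_apply_def]
      split_ifs <;> omega
  · rw [Fk, Perm.mul_apply, swap_apply_def, swap_apply_def]
    split_ifs <;> omega

lemma Dsw_fix {j x : ℕ} (h1 : x ≠ 3+j) (h2 : x ≠ 2*k+8+j) : Dsw k j x = x :=
  swap_apply_of_ne_of_ne h1 h2

lemma D_fix {x : ℕ} (h : x ≤ 2 ∨ (2*k+6 ≤ x ∧ x ≤ 2*k+7) ∨ 4*k+11 ≤ x) : D k x = x := by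
  refine prod_fix _ _ ?_
  intro g hg
  obtain ⟨j, hj, rfl⟩ := List.mem_map.mp hg
  have hj' := List.mem_range.mp hj
  exact Dsw_fix k (by omega) (by omega)

lemma D_apply {j x y : ℕ} (hj : j < 2*k+3)
    (hxy : (x = 3+j ∧ y = 2*k+8+j) ∨ (x = 2*k+8+j ∧ y = 3+j)) : D k x = y := by
  rw [D, prod_range_apply _ _ j x hj ?h1 ?h2]
  case h1 => intro j' _ hne; exact Dsw_fix k (by omega) (by omega)
  case h2 =>
    intro j' hj' hne
    refine Dsw_fix k ?_ ?_ <;>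
    · rw [Dsw, swap_apply_def]; split_ifs <;> omega
  · rw [Dsw, swap_apply_def]; split_ifs <;> omega

lemma u_fix {x : ℕ} (h : x ≠ 2 ∧ x ≠ 4 ∧ x ≠ 5 ∧ x ≠ 2*k+7 ∧ x ≠ 2*k+9 ∧ x ≠ 2*k+10) :
    u k x = x := by
  simp only [u, w, Perm.mul_apply, swap_apply_def]
  split_ifs <;> omega

lemma u_apply {x y : ℕ} (hxy : (x = 2 ∧ y = 2*k+7) ∨ (x = 2*k+7 ∧ y = 2) ∨
    (x = 4 ∧ y = 2*k+9) ∨ (x = 2*k+9 ∧ y = 4) ∨ (x = 5 ∧ y = 2*k+10) ∨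
    (x = 2*k+10 ∧ y = 5)) : u k x = y := by
  simp only [u, w, Perm.mul_apply, swap_apply_def]
  split_ifs <;> omega


lemma w_eval (i x y : ℕ) (h : (x = i ∧ y = 2*k+5+i) ∨ (x = 2*k+5+i ∧ y = i) ∨
    (x ≠ i ∧ x ≠ 2*k+5+i ∧ y = x)) : w k i x = y := by
  rw [w, swap_apply_def]; split_ifs <;> omega

lemma region (x : ℕ) : x = 0 ∨ (1 ≤ x ∧ x ≤ 5) ∨ (∃ j, j < k ∧ (x = 6+2*j ∨ x = 7+2*j)) ∨
    (∃ i, i < 5 ∧ x = 2*k+6+i) ∨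
    (∃ j, j < k ∧ (x = 2*k+11+2*j ∨ x = 2*k+12+2*j)) ∨ 4*k+11 ≤ x := by
  by_cases h1 : 6 ≤ x ∧ x ≤ 2*k+5
  · exact Or.inr (Or.inr (Or.inl ⟨(x-6)/2, by omega, by omega⟩))
  by_cases h2 : 2*k+6 ≤ x ∧ x ≤ 2*k+10
  · exact Or.inr (Or.inr (Or.inr (Or.inl ⟨x-(2*k+6), by omega, by omega⟩)))
  by_cases h3 : 2*k+11 ≤ x ∧ x ≤ 4*k+10
  · exact Or.inr (Or.inr (Or.inr (Or.inr (Or.inl ⟨(x-(2*k+11))/2, by omega, by omega⟩))))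
  · omega

lemma z_eval {x y : ℕ} (x1 x2 x3 : ℕ) (hC : C k x = x1) (hD : D k x1 = x2)
    (h2 : w k 2 x2 = x3) (h1 : w k 1 x3 = y) : z k x = y := by
  rw [z, Perm.mul_apply, Perm.mul_apply, Perm.mul_apply, hC, hD, h2, h1]

lemma z_fix {x : ℕ} (h : x = 0 ∨ 4*k+11 ≤ x) : z k x = x :=
  z_eval k (x) (x) (x) (C_fix k (by omega)) (D_fix k (by omega))
    (w_eval k 2 (x) (x) (by omega)) (w_eval k 1 (x) (x) (by omega))

lemma z_apply_lo {x : ℕ} (h1 : 1 ≤ x) (h2 : x ≤ 5) : z k x = 2*k+5+x := by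
  interval_cases x
  · exact (z_eval k (1) (1) (1) (C_fix k (by omega)) (D_fix k (by omega))
      (w_eval k 2 (1) (1) (by omega)) (w_eval k 1 (1) (2*k+6) (by omega))).trans (by omega)
  · exact (z_eval k (2) (2) (2*k+7) (C_fix k (by omega)) (D_fix k (by omega))
      (w_eval k 2 (2) (2*k+7) (by omega)) (w_eval k 1 (2*k+7) (2*k+7) (by omega))).trans (by omega)
  · exact (z_eval k (3) (2*k+8) (2*k+8) (C_fix k (by omega)) (D_apply k (j := 0) (by omega) (by omega))
      (w_eval k 2 (2*k+8) (2*k+8) (by omega)) (w_eval k 1 (2*k+8) (2*k+8) (by omega))).trans (by omega)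
  · exact (z_eval k (4) (2*k+9) (2*k+9) (C_fix k (by omega)) (D_apply k (j := 1) (by omega) (by omega))
      (w_eval k 2 (2*k+9) (2*k+9) (by omega)) (w_eval k 1 (2*k+9) (2*k+9) (by omega))).trans (by omega)
  · exact (z_eval k (5) (2*k+10) (2*k+10) (C_fix k (by omega)) (D_apply k (j := 2) (by omega) (by omega))
      (w_eval k 2 (2*k+10) (2*k+10) (by omega)) (w_eval k 1 (2*k+10) (2*k+10) (by omega))).trans (by omega)

lemma z_apply_hi {i : ℕ} (h : i < 5) : z k (2*k+6+i) = 1+i := by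
  interval_cases i
  · exact (z_eval k (2*k+6+0) (2*k+6+0) (2*k+6+0) (C_fix k (by omega)) (D_fix k (by omega))
      (w_eval k 2 (2*k+6+0) (2*k+6+0) (by omega)) (w_eval k 1 (2*k+6+0) (1) (by omega))).trans (by omega)
  · exact (z_eval k (2*k+6+1) (2*k+6+1) (2) (C_fix k (by omega)) (D_fix k (by omega))
      (w_eval k 2 (2*k+6+1) (2) (by omega)) (w_eval k 1 (2) (2) (by omega))).trans (by omega)
  · exact (z_eval k (2*k+6+2) (3) (3) (C_fix k (by omega)) (D_apply k (j := 0) (by omega) (by omega))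
      (w_eval k 2 (3) (3) (by omega)) (w_eval k 1 (3) (3) (by omega))).trans (by omega)
  · exact (z_eval k (2*k+6+3) (4) (4) (C_fix k (by omega)) (D_apply k (j := 1) (by omega) (by omega))
      (w_eval k 2 (4) (4) (by omega)) (w_eval k 1 (4) (4) (by omega))).trans (by omega)
  · exact (z_eval k (2*k+6+4) (5) (5) (C_fix k (by omega)) (D_apply k (j := 2) (by omega) (by omega))
      (w_eval k 2 (5) (5) (by omega)) (w_eval k 1 (5) (5) (by omega))).trans (by omega)

lemma z_apply_mid {j x y : ℕ} (hj : j < k)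
    (hxy : (x = 6+2*j ∧ y = 2*k+12+2*j) ∨ (x = 7+2*j ∧ y = 2*k+11+2*j) ∨
      (x = 2*k+11+2*j ∧ y = 7+2*j) ∨ (x = 2*k+12+2*j ∧ y = 6+2*j)) : z k x = y := by
  rcases hxy with ⟨rfl, rfl⟩ | ⟨rfl, rfl⟩ | ⟨rfl, rfl⟩ | ⟨rfl, rfl⟩
  · exact (z_eval k (7+2*j) (2*k+12+2*j) (2*k+12+2*j) (C_apply k hj (by omega)) (D_apply k (j := 4+2*j) (by omega) (by omega))
      (w_eval k 2 (2*k+12+2*j) (2*k+12+2*j) (by omega)) (w_eval k 1 (2*k+12+2*j) (2*k+12+2*j) (by omega))).trans (by omega)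
  · exact (z_eval k (6+2*j) (2*k+11+2*j) (2*k+11+2*j) (C_apply k hj (by omega)) (D_apply k (j := 3+2*j) (by omega) (by omega))
      (w_eval k 2 (2*k+11+2*j) (2*k+11+2*j) (by omega)) (w_eval k 1 (2*k+11+2*j) (2*k+11+2*j) (by omega))).trans (by omega)
  · exact (z_eval k (2*k+12+2*j) (7+2*j) (7+2*j) (C_apply k hj (by omega)) (D_apply k (j := 4+2*j) (by omega) (by omega))
      (w_eval k 2 (7+2*j) (7+2*j) (by omega)) (w_eval k 1 (7+2*j) (7+2*j) (by omega))).trans (by omega)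
  · exact (z_eval k (2*k+11+2*j) (6+2*j) (6+2*j) (C_apply k hj (by omega)) (D_apply k (j := 3+2*j) (by omega) (by omega))
      (w_eval k 2 (6+2*j) (6+2*j) (by omega)) (w_eval k 1 (6+2*j) (6+2*j) (by omega))).trans (by omega)


lemma u_u (x : ℕ) : u k (u k x) = x := by
  by_cases h2 : x = 2
  · subst h2
    rw [u_apply k (x := 2) (y := 2*k+7) (by omega), u_apply k (x := 2*k+7) (y := 2) (by omega)]
  by_cases h2' : x = 2*k+7
  · subst h2'
    rw [u_apply k (x := 2*k+7) (y := 2) (by omega), u_apply k (x := 2) (y := 2*k+7) (by omega)]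
  by_cases h4 : x = 4
  · subst h4
    rw [u_apply k (x := 4) (y := 2*k+9) (by omega), u_apply k (x := 2*k+9) (y := 4) (by omega)]
  by_cases h4' : x = 2*k+9
  · subst h4'
    rw [u_apply k (x := 2*k+9) (y := 4) (by omega), u_apply k (x := 4) (y := 2*k+9) (by omega)]
  by_cases h5 : x = 5
  · subst h5
    rw [u_apply k (x := 5) (y := 2*k+10) (by omega), u_apply k (x := 2*k+10) (y := 5) (by omega)]
  by_cases h5' : x = 2*k+10
  · subst h5'
    rw [u_apply k (x := 2*k+10) (y := 5) (by omega), u_apply k (x := 5) (y := 2*k+10) (by omega)]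
  · rw [u_fix k (x := x) (by omega), u_fix k (x := x) (by omega)]

lemma u_sq : u k * u k = 1 := by
  ext x
  rw [Perm.mul_apply, Perm.one_apply, u_u]

lemma C_sq : C k * C k = 1 := by
  ext x
  rw [Perm.mul_apply, Perm.one_apply]
  rcases region k x with rfl | h | ⟨j, hj, rfl | rfl⟩ | ⟨i, hi, rfl⟩ | ⟨j, hj, rfl | rfl⟩ | h
  · rw [C_fix k (x := 0) (by omega), C_fix k (x := 0) (by omega)]
  · rw [C_fix k (x := x) (by omega), C_fix k (x := x) (by omega)]
  · rw [C_apply k hj (x := 6+2*j) (y := 7+2*j) (by omega),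
      C_apply k hj (x := 7+2*j) (y := 6+2*j) (by omega)]
  · rw [C_apply k hj (x := 7+2*j) (y := 6+2*j) (by omega),
      C_apply k hj (x := 6+2*j) (y := 7+2*j) (by omega)]
  · rw [C_fix k (x := 2*k+6+i) (by omega), C_fix k (x := 2*k+6+i) (by omega)]
  · rw [C_apply k hj (x := 2*k+11+2*j) (y := 2*k+12+2*j) (by omega),
      C_apply k hj (x := 2*k+12+2*j) (y := 2*k+11+2*j) (by omega)]
  · rw [C_apply k hj (x := 2*k+12+2*j) (y := 2*k+11+2*j) (by omega),
      C_apply k hj (x := 2*k+11+2*j) (y := 2*k+12+2*j) (by omega)]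
  · rw [C_fix k (x := x) (by omega), C_fix k (x := x) (by omega)]

lemma z_sq : z k * z k = 1 := by
  ext x
  rw [Perm.mul_apply, Perm.one_apply]
  rcases region k x with rfl | h | ⟨j, hj, rfl | rfl⟩ | ⟨i, hi, rfl⟩ | ⟨j, hj, rfl | rfl⟩ | h
  · rw [z_fix k (x := 0) (by omega), z_fix k (x := 0) (by omega)]
  · rw [z_apply_lo k (x := x) h.1 h.2, show 2*k+5+x = 2*k+6+(x-1) by omega,
      z_apply_hi k (i := x-1) (by omega)]
    omega
  · rw [z_apply_mid k hj (x := 6+2*j) (y := 2*k+12+2*j) (by omega),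
      z_apply_mid k hj (x := 2*k+12+2*j) (y := 6+2*j) (by omega)]
  · rw [z_apply_mid k hj (x := 7+2*j) (y := 2*k+11+2*j) (by omega),
      z_apply_mid k hj (x := 2*k+11+2*j) (y := 7+2*j) (by omega)]
  · rw [z_apply_hi k hi, z_apply_lo k (x := 1+i) (by omega) (by omega)]
    omega
  · rw [z_apply_mid k hj (x := 2*k+11+2*j) (y := 7+2*j) (by omega),
      z_apply_mid k hj (x := 7+2*j) (y := 2*k+11+2*j) (by omega)]
  · rw [z_apply_mid k hj (x := 2*k+12+2*j) (y := 6+2*j) (by omega),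
      z_apply_mid k hj (x := 6+2*j) (y := 2*k+12+2*j) (by omega)]
  · rw [z_fix k (x := x) (by omega), z_fix k (x := x) (by omega)]

lemma z_z (x : ℕ) : z k (z k x) = x := by
  have := Equiv.ext_iff.mp (z_sq k) x
  rwa [Perm.mul_apply, Perm.one_apply] at this

lemma C_C (x : ℕ) : C k (C k x) = x := by
  have := Equiv.ext_iff.mp (C_sq k) x
  rwa [Perm.mul_apply, Perm.one_apply] at this

lemma commute_z_C : Commute (z k) (C k) := by
  apply Equiv.ext
  intro x
  rw [Perm.mul_apply, Perm.mul_apply]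
  rcases region k x with rfl | h | ⟨j, hj, rfl | rfl⟩ | ⟨i, hi, rfl⟩ | ⟨j, hj, rfl | rfl⟩ | h
  · rw [C_fix k (x := 0) (by omega), z_fix k (x := 0) (by omega),
      C_fix k (x := 0) (by omega)]
  · rw [C_fix k (x := x) (by omega), z_apply_lo k (x := x) h.1 h.2,
      C_fix k (x := 2*k+5+x) (by omega)]
  · rw [C_apply k hj (x := 6+2*j) (y := 7+2*j) (by omega),
      z_apply_mid k hj (x := 7+2*j) (y := 2*k+11+2*j) (by omega),
      z_apply_mid k hj (x := 6+2*j) (y := 2*k+12+2*j) (by omega),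
      C_apply k hj (x := 2*k+12+2*j) (y := 2*k+11+2*j) (by omega)]
  · rw [C_apply k hj (x := 7+2*j) (y := 6+2*j) (by omega),
      z_apply_mid k hj (x := 6+2*j) (y := 2*k+12+2*j) (by omega),
      z_apply_mid k hj (x := 7+2*j) (y := 2*k+11+2*j) (by omega),
      C_apply k hj (x := 2*k+11+2*j) (y := 2*k+12+2*j) (by omega)]
  · rw [C_fix k (x := 2*k+6+i) (by omega), z_apply_hi k hi,
      C_fix k (x := 1+i) (by omega)]
  · rw [C_apply k hj (x := 2*k+11+2*j) (y := 2*k+12+2*j) (by omega),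
      z_apply_mid k hj (x := 2*k+12+2*j) (y := 6+2*j) (by omega),
      z_apply_mid k hj (x := 2*k+11+2*j) (y := 7+2*j) (by omega),
      C_apply k hj (x := 7+2*j) (y := 6+2*j) (by omega)]
  · rw [C_apply k hj (x := 2*k+12+2*j) (y := 2*k+11+2*j) (by omega),
      z_apply_mid k hj (x := 2*k+11+2*j) (y := 7+2*j) (by omega),
      z_apply_mid k hj (x := 2*k+12+2*j) (y := 6+2*j) (by omega),
      C_apply k hj (x := 6+2*j) (y := 7+2*j) (by omega)]
  · rw [C_fix k (x := x) (by omega), z_fix k (x := x) (by omega),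
      C_fix k (x := x) (by omega)]


def Femb : Fin 5 ⊕ Fin 5 ↪ ℕ :=
  ⟨Sum.elim (fun i => (i : ℕ)+1) (fun i => 2*k+6+(i : ℕ)), by
    rintro (i | i) (j | j) h <;>
      simp only [Sum.elim_inl, Sum.elim_inr] at h <;>
      [skip; skip; skip; skip] <;>
    · first
      | (congr 1; exact Fin.ext (by omega))
      | (exfalso; have hi := i.isLt; have hj := j.isLt; omega)⟩

noncomputable def B1 : Perm (Fin 5) →* Perm ℕ :=
  (Perm.viaEmbeddingHom (Femb k)).comp ((Perm.sumCongrHom (Fin 5) (Fin 5)).comp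
    ((MonoidHom.id (Perm (Fin 5))).prod (MonoidHom.id _)))

lemma B1_F (σ : Perm (Fin 5)) (s : Fin 5 ⊕ Fin 5) :
    B1 k σ (Femb k s) = Femb k (Sum.map σ σ s) := by
  rw [B1]
  simp only [MonoidHom.comp_apply, MonoidHom.prod_apply, MonoidHom.id_apply,
    Perm.sumCongrHom_apply, Perm.viaEmbeddingHom_apply]
  rw [Perm.viaEmbedding_apply]
  rfl

lemma B1_fixR (σ : Perm (Fin 5)) {x : ℕ} (hx : x ∉ Set.range (Femb k)) :
    B1 k σ x = x := by
  rw [B1]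
  simp only [MonoidHom.comp_apply, MonoidHom.prod_apply, MonoidHom.id_apply,
    Perm.sumCongrHom_apply, Perm.viaEmbeddingHom_apply]
  exact Perm.viaEmbedding_apply_of_notMem _ _ x hx

lemma mem_range_Femb {x : ℕ} :
    x ∈ Set.range (Femb k) ↔ ((1 ≤ x ∧ x ≤ 5) ∨ (2*k+6 ≤ x ∧ x ≤ 2*k+10)) := by
  constructor
  · rintro ⟨(i | i), rfl⟩ <;>
      simp only [Femb, Function.Embedding.coeFn_mk, DFunLike.coe, Sum.elim_inl, Sum.elim_inr] <;>
      have hi := i.isLt <;> omega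
  · rintro (h | h)
    · exact ⟨Sum.inl ⟨x-1, by omega⟩, by
        simp only [Femb, Function.Embedding.coeFn_mk, DFunLike.coe, Sum.elim_inl]; omega⟩
    · exact ⟨Sum.inr ⟨x-(2*k+6), by omega⟩, by
        simp only [Femb, Function.Embedding.coeFn_mk, DFunLike.coe, Sum.elim_inr]; omega⟩

lemma B1_fix (σ : Perm (Fin 5)) {x : ℕ}
    (h : ¬((1 ≤ x ∧ x ≤ 5) ∨ (2*k+6 ≤ x ∧ x ≤ 2*k+10))) : B1 k σ x = x :=
  B1_fixR k σ (fun hx => h ((mem_range_Femb k).mp hx))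

lemma Femb_inl (i : Fin 5) : Femb k (Sum.inl i) = (i : ℕ)+1 := rfl
lemma Femb_inr (i : Fin 5) : Femb k (Sum.inr i) = 2*k+6+(i : ℕ) := rfl

lemma B1_lo (σ : Perm (Fin 5)) (i : Fin 5) {x y : ℕ} (hx : x = (i : ℕ)+1)
    (hy : y = (σ i : ℕ)+1) : B1 k σ x = y := by
  subst hx hy
  rw [← Femb_inl k i, B1_F]
  rfl

lemma B1_hi (σ : Perm (Fin 5)) (i : Fin 5) {x y : ℕ} (hx : x = 2*k+6+(i : ℕ))
    (hy : y = 2*k+6+(σ i : ℕ)) : B1 k σ x = y := by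
  subst hx hy
  rw [← Femb_inr k i, B1_F]
  rfl

lemma z_F (s : Fin 5 ⊕ Fin 5) : z k (Femb k s) = Femb k s.swap := by
  rcases s with i | i
  · have hi := i.isLt
    rw [Femb_inl, Sum.swap_inl, Femb_inr, z_apply_lo k (by omega) (by omega)]
    omega
  · have hi := i.isLt
    rw [Femb_inr, Sum.swap_inr, Femb_inl, z_apply_hi k (by omega)]
    omega

lemma C_F (s : Fin 5 ⊕ Fin 5) : C k (Femb k s) = Femb k s := by
  rcases s with i | i <;> have hi := i.isLt
  · rw [Femb_inl, C_fix k (by omega)]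
  · rw [Femb_inr, C_fix k (by omega)]

lemma commute_z_B1 (σ : Perm (Fin 5)) : Commute (z k) (B1 k σ) := by
  apply Equiv.ext
  intro x
  rw [Perm.mul_apply, Perm.mul_apply]
  by_cases hx : x ∈ Set.range (Femb k)
  · obtain ⟨s, rfl⟩ := hx
    rw [B1_F, z_F, z_F, B1_F]
    congr 1
    rcases s with i | i <;> rfl
  · have hzx : z k x ∉ Set.range (Femb k) := by
      rintro ⟨s, hs⟩
      exact hx ⟨s.swap, by rw [← z_F, hs, z_z]⟩
    rw [B1_fixR k σ hx, B1_fixR k σ hzx]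

lemma commute_C_B1 (σ : Perm (Fin 5)) : Commute (C k) (B1 k σ) := by
  apply Equiv.ext
  intro x
  rw [Perm.mul_apply, Perm.mul_apply]
  by_cases hx : x ∈ Set.range (Femb k)
  · obtain ⟨s, rfl⟩ := hx
    rw [B1_F, C_F, C_F, B1_F]
  · have hcx : C k x ∉ Set.range (Femb k) := by
      rintro ⟨s, hs⟩
      exact hx ⟨s, by rw [← C_F k s, hs, C_C]⟩
    rw [B1_fixR k σ hx, B1_fixR k σ hcx]


lemma mult_zmod2_cases (x : Multiplicative (ZMod 2)) :
    x = 1 ∨ x = Multiplicative.ofAdd (1 : ZMod 2) := by revert x; decide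

lemma ofAdd_ne_one : ¬(Multiplicative.ofAdd (1 : ZMod 2) = 1) := by decide

lemma ofAdd_mul_self :
    Multiplicative.ofAdd (1 : ZMod 2) * Multiplicative.ofAdd (1 : ZMod 2) = 1 := by decide

noncomputable def zeta : Multiplicative (ZMod 2) →* Perm ℕ :=
  MonoidHom.mk' (fun e => if e = 1 then 1 else z k) (by
    intro a b
    rcases mult_zmod2_cases a with rfl | rfl <;> rcases mult_zmod2_cases b with rfl | rfl
    · rw [one_mul, if_pos rfl, one_mul]
    · rw [one_mul, if_neg ofAdd_ne_one, if_pos rfl, one_mul]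
    · rw [mul_one, if_neg ofAdd_ne_one, if_pos rfl, mul_one]
    · rw [ofAdd_mul_self, if_pos rfl, if_neg ofAdd_ne_one]
      exact (z_sq k).symm)

lemma zeta_apply (e : Multiplicative (ZMod 2)) :
    zeta k e = if e = 1 then 1 else z k := rfl

noncomputable def beta : Perm (Fin 5) →* Perm ℕ :=
  MonoidHom.mk' (fun σ => B1 k σ * (if Perm.sign σ = 1 then 1 else C k)) (by
    intro σ τ
    rcases Int.units_eq_one_or (Perm.sign σ) with hσ | hσ <;>
      rcases Int.units_eq_one_or (Perm.sign τ) with hτ | hτ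
    · have h1 : Perm.sign (σ * τ) = 1 := by rw [map_mul, hσ, hτ, one_mul]
      rw [map_mul (B1 k), h1, if_pos rfl, if_pos hσ, if_pos hτ, mul_one, mul_one, mul_one]
    · have h1 : Perm.sign (σ * τ) = -1 := by rw [map_mul, hσ, hτ, one_mul]
      rw [map_mul (B1 k), h1, if_neg (by decide), if_pos hσ, if_neg (by rw [hτ]; decide),
        mul_one, mul_assoc]
    · have h1 : Perm.sign (σ * τ) = -1 := by rw [map_mul, hσ, hτ, mul_one]
      rw [map_mul (B1 k), h1, if_neg (by decide), if_neg (by rw [hσ]; decide), if_pos hτ,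
        mul_one, mul_assoc, mul_assoc, (commute_C_B1 k τ).eq]
    · have h1 : Perm.sign (σ * τ) = 1 := by rw [map_mul, hσ, hτ]; decide
      rw [map_mul (B1 k), h1, if_pos rfl, if_neg (by rw [hσ]; decide),
        if_neg (by rw [hτ]; decide), mul_one, mul_assoc (B1 k σ) (C k),
        ← mul_assoc (C k) (B1 k τ), (commute_C_B1 k τ).eq, mul_assoc (B1 k τ) (C k) (C k),
        C_sq, mul_one])

lemma beta_apply (σ : Perm (Fin 5)) :
    beta k σ = B1 k σ * (if Perm.sign σ = 1 then 1 else C k) := rfl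

lemma commute_zeta_beta (e : Multiplicative (ZMod 2)) (σ : Perm (Fin 5)) :
    Commute (zeta k e) (beta k σ) := by
  rw [zeta_apply, beta_apply]
  rcases mult_zmod2_cases e with rfl | rfl
  · rw [if_pos rfl]; exact Commute.one_left _
  · rw [if_neg ofAdd_ne_one]
    refine Commute.mul_right (commute_z_B1 k σ) ?_
    by_cases h : Perm.sign σ = 1
    · rw [if_pos h]; exact Commute.one_right _
    · rw [if_neg h]; exact commute_z_C k

noncomputable def phi' : Multiplicative (ZMod 2) × Perm (Fin 5) →* Perm ℕ :=
  (zeta k).noncommCoprod (beta k) (commute_zeta_beta k)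

lemma phi'_apply (e : Multiplicative (ZMod 2)) (σ : Perm (Fin 5)) :
    phi' k (e, σ) = zeta k e * (B1 k σ * (if Perm.sign σ = 1 then 1 else C k)) :=
  rfl

lemma phi'_injective : Function.Injective (phi' k) := by
  rw [injective_iff_map_eq_one]
  rintro ⟨e, σ⟩ h
  rw [phi'_apply] at h
  have happ : ∀ x : ℕ, zeta k e (B1 k σ ((if Perm.sign σ = 1 then (1 : Perm ℕ)
      else C k) x)) = x := by
    intro x
    have := Equiv.ext_iff.mp h x
    rwa [Perm.mul_apply, Perm.mul_apply, Perm.one_apply] at this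
  have key : ∀ i : Fin 5, zeta k e ((σ i : ℕ)+1) = (i : ℕ)+1 := by
    intro i
    have hi := i.isLt
    have h0 := happ ((i : ℕ)+1)
    have hfix : (if Perm.sign σ = 1 then (1 : Perm ℕ) else C k) ((i : ℕ)+1)
        = (i : ℕ)+1 := by
      by_cases hs : Perm.sign σ = 1
      · rw [if_pos hs, Perm.one_apply]
      · rw [if_neg hs, C_fix k (by omega)]
    rw [hfix, B1_lo k σ i rfl rfl] at h0
    exact h0
  have he : e = 1 := by
    rcases mult_zmod2_cases e with rfl | rfl
    · rfl
    · exfalso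
      have h0 := key 0
      have hlt := (σ 0).isLt
      rw [zeta_apply, if_neg ofAdd_ne_one,
        z_apply_lo k (x := ((σ 0 : Fin 5) : ℕ)+1) (by omega) (by omega)] at h0
      omega
  subst he
  have hσ : σ = 1 := by
    apply Equiv.ext
    intro i
    have h0 := key i
    rw [zeta_apply, if_pos rfl, Perm.one_apply] at h0
    rw [Perm.one_apply]
    exact Fin.ext (by omega)
  rw [hσ]
  rfl


lemma swap_congr (a b a' b' : ℕ) (h1 : a = a') (h2 : b = b') :
    (swap a b : Perm ℕ) = swap a' b' := by rw [h1, h2]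

lemma swap2_congr (a b c d a' b' c' d' : ℕ) (h1 : a = a') (h2 : b = b') (h3 : c = c')
    (h4 : d = d') : (swap a b * swap c d : Perm ℕ) = swap a' b' * swap c' d' := by
  rw [h1, h2, h3, h4]

lemma t2_eq : t2 (2*k+5) = Fk k 0 * C k := by
  rw [t2, C, show (2*k+5-3)/2 = k+1 from by omega, List.range_succ_eq_map,
    List.map_cons, List.prod_cons, List.map_map]
  congr 1
  refine congrArg List.prod (List.map_congr_left fun a ha => ?_)
  simp only [Function.comp_apply]
  exact swap2_congr _ _ _ _ (4+2*(a+1)) (5+2*(a+1)) (2*k+9+2*(a+1)) (2*k+10+2*(a+1))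
    (by omega) (by omega) (by omega) (by omega)

lemma t4_eq : t4 (2*k+5) = (swap 1 2 * swap (2*k+6) (2*k+7)) * D k := by
  rw [t4, D, show (2*k+5-2) = 2*k+3 from by omega, show 2*k+5+1 = 2*k+6 from by omega,
    show 2*k+5+2 = 2*k+7 from by omega]
  congr 1
  refine congrArg List.prod (List.map_congr_left fun a ha => ?_)
  exact swap_congr _ _ (3+a) (2*k+8+a) (by omega) (by omega)

lemma Fk_eval (j : ℕ) {x y : ℕ}
    (h : (x = 4+2*j ∧ y = 5+2*j) ∨ (x = 5+2*j ∧ y = 4+2*j) ∨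
      (x = 2*k+9+2*j ∧ y = 2*k+10+2*j) ∨ (x = 2*k+10+2*j ∧ y = 2*k+9+2*j) ∨
      (x ≠ 4+2*j ∧ x ≠ 5+2*j ∧ x ≠ 2*k+9+2*j ∧ x ≠ 2*k+10+2*j ∧ y = x)) :
    Fk k j x = y := by
  rw [Fk, Perm.mul_apply, swap_apply_def, swap_apply_def]
  split_ifs <;> omega

lemma t3_eval {x y : ℕ}
    (h : (x = 1 ∧ y = 3) ∨ (x = 3 ∧ y = 1) ∨ (x = 2 ∧ y = 4) ∨ (x = 4 ∧ y = 2) ∨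
      (x = 2*k+6 ∧ y = 2*k+8) ∨ (x = 2*k+8 ∧ y = 2*k+6) ∨ (x = 2*k+7 ∧ y = 2*k+9) ∨
      (x = 2*k+9 ∧ y = 2*k+7) ∨
      (x ≠ 1 ∧ x ≠ 2 ∧ x ≠ 3 ∧ x ≠ 4 ∧ x ≠ 2*k+6 ∧ x ≠ 2*k+7 ∧ x ≠ 2*k+8 ∧ x ≠ 2*k+9 ∧
        y = x)) :
    t3 (2*k+5) x = y := by
  rw [t3]
  simp only [Perm.mul_apply, swap_apply_def]
  split_ifs <;> omega

lemma A2_eval {x y : ℕ}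
    (h : (x = 1 ∧ y = 2) ∨ (x = 2 ∧ y = 1) ∨ (x = 2*k+6 ∧ y = 2*k+7) ∨
      (x = 2*k+7 ∧ y = 2*k+6) ∨ (x ≠ 1 ∧ x ≠ 2 ∧ x ≠ 2*k+6 ∧ x ≠ 2*k+7 ∧ y = x)) :
    swap 1 2 ((swap (2*k+6) (2*k+7) : Perm ℕ) x) = y := by
  rw [swap_apply_def, swap_apply_def]
  split_ifs <;> omega

lemma B1_lo' (σ : Perm (Fin 5)) (i i' : ℕ) (hi : i < 5) (hi' : i' < 5)
    (hσ : σ ⟨i, hi⟩ = ⟨i', hi'⟩) {x y : ℕ} (hx : x = i+1) (hy : y = i'+1) :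
    B1 k σ x = y := by
  refine B1_lo k σ ⟨i, hi⟩ (by simpa using hx) ?_
  rw [hσ, hy]

lemma B1_hi' (σ : Perm (Fin 5)) (i i' : ℕ) (hi : i < 5) (hi' : i' < 5)
    (hσ : σ ⟨i, hi⟩ = ⟨i', hi'⟩) {x y : ℕ} (hx : x = 2*k+6+i) (hy : y = 2*k+6+i') :
    B1 k σ x = y := by
  refine B1_hi k σ ⟨i, hi⟩ (by simpa using hx) ?_
  rw [hσ, hy]

lemma u_inv : (u k)⁻¹ = u k := inv_eq_of_mul_eq_one_right (u_sq k)


lemma phi_b : u k * phi' k (1, swap (3:Fin 5) 4) * (u k)⁻¹ = t2 (2*k+5) := by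
  rw [u_inv, phi'_apply, zeta_apply, if_pos rfl, one_mul,
    if_neg (show ¬(Perm.sign (swap (3:Fin 5) 4) = 1) from by
      rw [Perm.sign_swap (by decide)]; decide), t2_eq]
  ext x
  simp only [Perm.mul_apply]
  rcases region k x with rfl | hx | ⟨j, hj, rfl | rfl⟩ | ⟨i, hi, rfl⟩ | ⟨j, hj, rfl | rfl⟩ | hx
  · rw [u_fix k (x := 0) (by omega),
      C_fix k (x := 0) (by omega),
      B1_fix k (swap (3:Fin 5) 4) (x := 0) (by omega),
      u_fix k (x := 0) (by omega),
      Fk_eval k 0 (x := 0) (y := 0) (by omega)]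
  · obtain ⟨hx1, hx2⟩ := hx
    interval_cases x
    · rw [u_fix k (x := 1) (by omega),
      C_fix k (x := 1) (by omega),
      B1_lo' k (swap (3:Fin 5) 4) 0 0 (by omega) (by omega) (by decide) (x := 1) (y := 1) (by omega) (by omega),
      u_fix k (x := 1) (by omega),
      Fk_eval k 0 (x := 1) (y := 1) (by omega)]
    · rw [u_apply k (x := 2) (y := 2*k+7) (by omega),
      C_fix k (x := 2*k+7) (by omega),
      C_fix k (x := 2) (by omega),
      B1_hi' k (swap (3:Fin 5) 4) 1 1 (by omega) (by omega) (by decide) (x := 2*k+7) (y := 2*k+7) (by omega) (by omega),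
      u_apply k (x := 2*k+7) (y := 2) (by omega),
      Fk_eval k 0 (x := 2) (y := 2) (by omega)]
    · rw [u_fix k (x := 3) (by omega),
      C_fix k (x := 3) (by omega),
      B1_lo' k (swap (3:Fin 5) 4) 2 2 (by omega) (by omega) (by decide) (x := 3) (y := 3) (by omega) (by omega),
      u_fix k (x := 3) (by omega),
      Fk_eval k 0 (x := 3) (y := 3) (by omega)]
    · rw [u_apply k (x := 4) (y := 2*k+9) (by omega),
      C_fix k (x := 2*k+9) (by omega),
      C_fix k (x := 4) (by omega),
      B1_hi' k (swap (3:Fin 5) 4) 3 4 (by omega) (by omega) (by decide) (x := 2*k+9) (y := 2*k+10) (by omega) (by omega),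
      u_apply k (x := 2*k+10) (y := 5) (by omega),
      Fk_eval k 0 (x := 4) (y := 5) (by omega)]
    · rw [u_apply k (x := 5) (y := 2*k+10) (by omega),
      C_fix k (x := 2*k+10) (by omega),
      C_fix k (x := 5) (by omega),
      B1_hi' k (swap (3:Fin 5) 4) 4 3 (by omega) (by omega) (by decide) (x := 2*k+10) (y := 2*k+9) (by omega) (by omega),
      u_apply k (x := 2*k+9) (y := 4) (by omega),
      Fk_eval k 0 (x := 5) (y := 4) (by omega)]
  · rw [u_fix k (x := 6+2*j) (by omega),
      C_apply k hj (x := 6+2*j) (y := 7+2*j) (by omega),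
      B1_fix k (swap (3:Fin 5) 4) (x := 7+2*j) (by omega),
      u_fix k (x := 7+2*j) (by omega),
      Fk_eval k 0 (x := 7+2*j) (y := 7+2*j) (by omega)]
  · rw [u_fix k (x := 7+2*j) (by omega),
      C_apply k hj (x := 7+2*j) (y := 6+2*j) (by omega),
      B1_fix k (swap (3:Fin 5) 4) (x := 6+2*j) (by omega),
      u_fix k (x := 6+2*j) (by omega),
      Fk_eval k 0 (x := 6+2*j) (y := 6+2*j) (by omega)]
  · interval_cases i
    · rw [u_fix k (x := 2*k+6+0) (by omega),
      C_fix k (x := 2*k+6+0) (by omega),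
      B1_hi' k (swap (3:Fin 5) 4) 0 0 (by omega) (by omega) (by decide +revert) (x := 2*k+6+0) (y := 2*k+6+0) (by omega) (by omega),
      u_fix k (x := 2*k+6+0) (by omega),
      Fk_eval k 0 (x := 2*k+6+0) (y := 2*k+6+0) (by omega)]
    · rw [u_apply k (x := 2*k+6+1) (y := 2) (by omega),
      C_fix k (x := 2) (by omega),
      C_fix k (x := 2*k+6+1) (by omega),
      B1_lo' k (swap (3:Fin 5) 4) 1 1 (by omega) (by omega) (by decide +revert) (x := 2) (y := 2) (by omega) (by omega),
      u_apply k (x := 2) (y := 2*k+6+1) (by omega),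
      Fk_eval k 0 (x := 2*k+6+1) (y := 2*k+6+1) (by omega)]
    · rw [u_fix k (x := 2*k+6+2) (by omega),
      C_fix k (x := 2*k+6+2) (by omega),
      B1_hi' k (swap (3:Fin 5) 4) 2 2 (by omega) (by omega) (by decide +revert) (x := 2*k+6+2) (y := 2*k+6+2) (by omega) (by omega),
      u_fix k (x := 2*k+6+2) (by omega),
      Fk_eval k 0 (x := 2*k+6+2) (y := 2*k+6+2) (by omega)]
    · rw [u_apply k (x := 2*k+6+3) (y := 4) (by omega),
      C_fix k (x := 4) (by omega),
      C_fix k (x := 2*k+6+3) (by omega),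
      B1_lo' k (swap (3:Fin 5) 4) 3 4 (by omega) (by omega) (by decide +revert) (x := 4) (y := 5) (by omega) (by omega),
      u_apply k (x := 5) (y := 2*k+6+4) (by omega),
      Fk_eval k 0 (x := 2*k+6+3) (y := 2*k+6+4) (by omega)]
    · rw [u_apply k (x := 2*k+6+4) (y := 5) (by omega),
      C_fix k (x := 5) (by omega),
      C_fix k (x := 2*k+6+4) (by omega),
      B1_lo' k (swap (3:Fin 5) 4) 4 3 (by omega) (by omega) (by decide +revert) (x := 5) (y := 4) (by omega) (by omega),
      u_apply k (x := 4) (y := 2*k+6+3) (by omega),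
      Fk_eval k 0 (x := 2*k+6+4) (y := 2*k+6+3) (by omega)]
  · rw [u_fix k (x := 2*k+11+2*j) (by omega),
      C_apply k hj (x := 2*k+11+2*j) (y := 2*k+12+2*j) (by omega),
      B1_fix k (swap (3:Fin 5) 4) (x := 2*k+12+2*j) (by omega),
      u_fix k (x := 2*k+12+2*j) (by omega),
      Fk_eval k 0 (x := 2*k+12+2*j) (y := 2*k+12+2*j) (by omega)]
  · rw [u_fix k (x := 2*k+12+2*j) (by omega),
      C_apply k hj (x := 2*k+12+2*j) (y := 2*k+11+2*j) (by omega),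
      B1_fix k (swap (3:Fin 5) 4) (x := 2*k+11+2*j) (by omega),
      u_fix k (x := 2*k+11+2*j) (by omega),
      Fk_eval k 0 (x := 2*k+11+2*j) (y := 2*k+11+2*j) (by omega)]
  · rw [u_fix k (x := x) (by omega),
      C_fix k (x := x) (by omega),
      B1_fix k (swap (3:Fin 5) 4) (x := x) (by omega),
      u_fix k (x := x) (by omega),
      Fk_eval k 0 (x := x) (y := x) (by omega)]

lemma phi_c : u k * phi' k (1, swap (0:Fin 5) 2 * swap (1:Fin 5) 3) * (u k)⁻¹ = t3 (2*k+5) := by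
  rw [u_inv, phi'_apply, zeta_apply, if_pos rfl, one_mul,
    if_pos (show Perm.sign (swap (0:Fin 5) 2 * swap (1:Fin 5) 3) = 1 from by
      rw [map_mul, Perm.sign_swap (by decide), Perm.sign_swap (by decide)]; decide),
    mul_one]
  ext x
  simp only [Perm.mul_apply]
  rcases region k x with rfl | hx | ⟨j, hj, rfl | rfl⟩ | ⟨i, hi, rfl⟩ | ⟨j, hj, rfl | rfl⟩ | hx
  · rw [u_fix k (x := 0) (by omega),
      B1_fix k (swap (0:Fin 5) 2 * swap (1:Fin 5) 3) (x := 0) (by omega),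
      u_fix k (x := 0) (by omega),
      t3_eval k (x := 0) (y := 0) (by omega)]
  · obtain ⟨hx1, hx2⟩ := hx
    interval_cases x
    · rw [u_fix k (x := 1) (by omega),
      B1_lo' k (swap (0:Fin 5) 2 * swap (1:Fin 5) 3) 0 2 (by omega) (by omega) (by decide) (x := 1) (y := 3) (by omega) (by omega),
      u_fix k (x := 3) (by omega),
      t3_eval k (x := 1) (y := 3) (by omega)]
    · rw [u_apply k (x := 2) (y := 2*k+7) (by omega),
      B1_hi' k (swap (0:Fin 5) 2 * swap (1:Fin 5) 3) 1 3 (by omega) (by omega) (by decide) (x := 2*k+7) (y := 2*k+6+3) (by omega) (by omega),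
      u_apply k (x := 2*k+6+3) (y := 4) (by omega),
      t3_eval k (x := 2) (y := 4) (by omega)]
    · rw [u_fix k (x := 3) (by omega),
      B1_lo' k (swap (0:Fin 5) 2 * swap (1:Fin 5) 3) 2 0 (by omega) (by omega) (by decide) (x := 3) (y := 1) (by omega) (by omega),
      u_fix k (x := 1) (by omega),
      t3_eval k (x := 3) (y := 1) (by omega)]
    · rw [u_apply k (x := 4) (y := 2*k+9) (by omega),
      B1_hi' k (swap (0:Fin 5) 2 * swap (1:Fin 5) 3) 3 1 (by omega) (by omega) (by decide) (x := 2*k+9) (y := 2*k+6+1) (by omega) (by omega),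
      u_apply k (x := 2*k+6+1) (y := 2) (by omega),
      t3_eval k (x := 4) (y := 2) (by omega)]
    · rw [u_apply k (x := 5) (y := 2*k+10) (by omega),
      B1_hi' k (swap (0:Fin 5) 2 * swap (1:Fin 5) 3) 4 4 (by omega) (by omega) (by decide) (x := 2*k+10) (y := 2*k+6+4) (by omega) (by omega),
      u_apply k (x := 2*k+6+4) (y := 5) (by omega),
      t3_eval k (x := 5) (y := 5) (by omega)]
  · rw [u_fix k (x := 6+2*j) (by omega),
      B1_fix k (swap (0:Fin 5) 2 * swap (1:Fin 5) 3) (x := 6+2*j) (by omega),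
      u_fix k (x := 6+2*j) (by omega),
      t3_eval k (x := 6+2*j) (y := 6+2*j) (by omega)]
  · rw [u_fix k (x := 7+2*j) (by omega),
      B1_fix k (swap (0:Fin 5) 2 * swap (1:Fin 5) 3) (x := 7+2*j) (by omega),
      u_fix k (x := 7+2*j) (by omega),
      t3_eval k (x := 7+2*j) (y := 7+2*j) (by omega)]
  · interval_cases i
    · rw [u_fix k (x := 2*k+6+0) (by omega),
      B1_hi' k (swap (0:Fin 5) 2 * swap (1:Fin 5) 3) 0 2 (by omega) (by omega) (by decide +revert) (x := 2*k+6+0) (y := 2*k+6+2) (by omega) (by omega),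
      u_fix k (x := 2*k+6+2) (by omega),
      t3_eval k (x := 2*k+6+0) (y := 2*k+6+2) (by omega)]
    · rw [u_apply k (x := 2*k+6+1) (y := 2) (by omega),
      B1_lo' k (swap (0:Fin 5) 2 * swap (1:Fin 5) 3) 1 3 (by omega) (by omega) (by decide +revert) (x := 2) (y := 4) (by omega) (by omega),
      u_apply k (x := 4) (y := 2*k+6+3) (by omega),
      t3_eval k (x := 2*k+6+1) (y := 2*k+6+3) (by omega)]
    · rw [u_fix k (x := 2*k+6+2) (by omega),
      B1_hi' k (swap (0:Fin 5) 2 * swap (1:Fin 5) 3) 2 0 (by omega) (by omega) (by decide +revert) (x := 2*k+6+2) (y := 2*k+6+0) (by omega) (by omega),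
      u_fix k (x := 2*k+6+0) (by omega),
      t3_eval k (x := 2*k+6+2) (y := 2*k+6+0) (by omega)]
    · rw [u_apply k (x := 2*k+6+3) (y := 4) (by omega),
      B1_lo' k (swap (0:Fin 5) 2 * swap (1:Fin 5) 3) 3 1 (by omega) (by omega) (by decide +revert) (x := 4) (y := 2) (by omega) (by omega),
      u_apply k (x := 2) (y := 2*k+6+1) (by omega),
      t3_eval k (x := 2*k+6+3) (y := 2*k+6+1) (by omega)]
    · rw [u_apply k (x := 2*k+6+4) (y := 5) (by omega),
      B1_lo' k (swap (0:Fin 5) 2 * swap (1:Fin 5) 3) 4 4 (by omega) (by omega) (by decide +revert) (x := 5) (y := 5) (by omega) (by omega),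
      u_apply k (x := 5) (y := 2*k+6+4) (by omega),
      t3_eval k (x := 2*k+6+4) (y := 2*k+6+4) (by omega)]
  · rw [u_fix k (x := 2*k+11+2*j) (by omega),
      B1_fix k (swap (0:Fin 5) 2 * swap (1:Fin 5) 3) (x := 2*k+11+2*j) (by omega),
      u_fix k (x := 2*k+11+2*j) (by omega),
      t3_eval k (x := 2*k+11+2*j) (y := 2*k+11+2*j) (by omega)]
  · rw [u_fix k (x := 2*k+12+2*j) (by omega),
      B1_fix k (swap (0:Fin 5) 2 * swap (1:Fin 5) 3) (x := 2*k+12+2*j) (by omega),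
      u_fix k (x := 2*k+12+2*j) (by omega),
      t3_eval k (x := 2*k+12+2*j) (y := 2*k+12+2*j) (by omega)]
  · rw [u_fix k (x := x) (by omega),
      B1_fix k (swap (0:Fin 5) 2 * swap (1:Fin 5) 3) (x := x) (by omega),
      u_fix k (x := x) (by omega),
      t3_eval k (x := x) (y := x) (by omega)]

lemma phi_a : u k * phi' k (Multiplicative.ofAdd (1 : ZMod 2), swap (0:Fin 5) 1) * (u k)⁻¹
    = t4 (2*k+5) := by
  rw [u_inv, phi'_apply, zeta_apply, if_neg ofAdd_ne_one,
    if_neg (show ¬(Perm.sign (swap (0:Fin 5) 1) = 1) from by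
      rw [Perm.sign_swap (by decide)]; decide), t4_eq]
  ext x
  simp only [Perm.mul_apply]
  rcases region k x with rfl | hx | ⟨j, hj, rfl | rfl⟩ | ⟨i, hi, rfl⟩ | ⟨j, hj, rfl | rfl⟩ | hx
  · rw [u_fix k (x := 0) (by omega),
      C_fix k (x := 0) (by omega),
      B1_fix k (swap (0:Fin 5) 1) (x := 0) (by omega),
      z_fix k (x := 0) (by omega),
      u_fix k (x := 0) (by omega),
      D_fix k (x := 0) (by omega),
      A2_eval k (x := 0) (y := 0) (by omega)]
  · obtain ⟨hx1, hx2⟩ := hx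
    interval_cases x
    · rw [u_fix k (x := 1) (by omega),
      C_fix k (x := 1) (by omega),
      B1_lo' k (swap (0:Fin 5) 1) 0 1 (by omega) (by omega) (by decide) (x := 1) (y := 2) (by omega) (by omega),
      z_apply_lo k (x := 2) (by omega) (by omega),
      u_apply k (x := 2*k+5+2) (y := 2) (by omega),
      D_fix k (x := 1) (by omega),
      A2_eval k (x := 1) (y := 2) (by omega)]
    · rw [u_apply k (x := 2) (y := 2*k+7) (by omega),
      C_fix k (x := 2*k+7) (by omega),
      B1_hi' k (swap (0:Fin 5) 1) 1 0 (by omega) (by omega) (by decide) (x := 2*k+7) (y := 2*k+6+0) (by omega) (by omega),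
      z_apply_hi k (i := 0) (by omega),
      u_fix k (x := 1+0) (by omega),
      D_fix k (x := 2) (by omega),
      A2_eval k (x := 2) (y := 1+0) (by omega)]
    · rw [u_fix k (x := 3) (by omega),
      C_fix k (x := 3) (by omega),
      B1_lo' k (swap (0:Fin 5) 1) 2 2 (by omega) (by omega) (by decide) (x := 3) (y := 3) (by omega) (by omega),
      z_apply_lo k (x := 3) (by omega) (by omega),
      u_fix k (x := 2*k+5+3) (by omega),
      D_apply k (j := 0) (x := 3) (y := 2*k+5+3) (by omega) (by omega),
      A2_eval k (x := 2*k+5+3) (y := 2*k+5+3) (by omega)]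
    · rw [u_apply k (x := 4) (y := 2*k+9) (by omega),
      C_fix k (x := 2*k+9) (by omega),
      B1_hi' k (swap (0:Fin 5) 1) 3 3 (by omega) (by omega) (by decide) (x := 2*k+9) (y := 2*k+6+3) (by omega) (by omega),
      z_apply_hi k (i := 3) (by omega),
      u_apply k (x := 1+3) (y := 2*k+9) (by omega),
      D_apply k (j := 1) (x := 4) (y := 2*k+9) (by omega) (by omega),
      A2_eval k (x := 2*k+9) (y := 2*k+9) (by omega)]
    · rw [u_apply k (x := 5) (y := 2*k+10) (by omega),
      C_fix k (x := 2*k+10) (by omega),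
      B1_hi' k (swap (0:Fin 5) 1) 4 4 (by omega) (by omega) (by decide) (x := 2*k+10) (y := 2*k+6+4) (by omega) (by omega),
      z_apply_hi k (i := 4) (by omega),
      u_apply k (x := 1+4) (y := 2*k+10) (by omega),
      D_apply k (j := 2) (x := 5) (y := 2*k+10) (by omega) (by omega),
      A2_eval k (x := 2*k+10) (y := 2*k+10) (by omega)]
  · rw [u_fix k (x := 6+2*j) (by omega),
      C_apply k hj (x := 6+2*j) (y := 7+2*j) (by omega),
      B1_fix k (swap (0:Fin 5) 1) (x := 7+2*j) (by omega),
      z_apply_mid k hj (x := 7+2*j) (y := 2*k+11+2*j) (by omega),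
      u_fix k (x := 2*k+11+2*j) (by omega),
      D_apply k (j := 3+2*j) (x := 6+2*j) (y := 2*k+11+2*j) (by omega) (by omega),
      A2_eval k (x := 2*k+11+2*j) (y := 2*k+11+2*j) (by omega)]
  · rw [u_fix k (x := 7+2*j) (by omega),
      C_apply k hj (x := 7+2*j) (y := 6+2*j) (by omega),
      B1_fix k (swap (0:Fin 5) 1) (x := 6+2*j) (by omega),
      z_apply_mid k hj (x := 6+2*j) (y := 2*k+12+2*j) (by omega),
      u_fix k (x := 2*k+12+2*j) (by omega),
      D_apply k (j := 4+2*j) (x := 7+2*j) (y := 2*k+12+2*j) (by omega) (by omega),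
      A2_eval k (x := 2*k+12+2*j) (y := 2*k+12+2*j) (by omega)]
  · interval_cases i
    · rw [u_fix k (x := 2*k+6+0) (by omega),
      C_fix k (x := 2*k+6+0) (by omega),
      B1_hi' k (swap (0:Fin 5) 1) 0 1 (by omega) (by omega) (by decide +revert) (x := 2*k+6+0) (y := 2*k+6+1) (by omega) (by omega),
      z_apply_hi k (i := 1) (by omega),
      u_apply k (x := 1+1) (y := 2*k+6+1) (by omega),
      D_fix k (x := 2*k+6+0) (by omega),
      A2_eval k (x := 2*k+6+0) (y := 2*k+6+1) (by omega)]
    · rw [u_apply k (x := 2*k+6+1) (y := 2) (by omega),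
      C_fix k (x := 2) (by omega),
      B1_lo' k (swap (0:Fin 5) 1) 1 0 (by omega) (by omega) (by decide +revert) (x := 2) (y := 1) (by omega) (by omega),
      z_apply_lo k (x := 1) (by omega) (by omega),
      u_fix k (x := 2*k+5+1) (by omega),
      D_fix k (x := 2*k+6+1) (by omega),
      A2_eval k (x := 2*k+6+1) (y := 2*k+5+1) (by omega)]
    · rw [u_fix k (x := 2*k+6+2) (by omega),
      C_fix k (x := 2*k+6+2) (by omega),
      B1_hi' k (swap (0:Fin 5) 1) 2 2 (by omega) (by omega) (by decide +revert) (x := 2*k+6+2) (y := 2*k+6+2) (by omega) (by omega),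
      z_apply_hi k (i := 2) (by omega),
      u_fix k (x := 1+2) (by omega),
      D_apply k (j := 0) (x := 2*k+6+2) (y := 1+2) (by omega) (by omega),
      A2_eval k (x := 1+2) (y := 1+2) (by omega)]
    · rw [u_apply k (x := 2*k+6+3) (y := 4) (by omega),
      C_fix k (x := 4) (by omega),
      B1_lo' k (swap (0:Fin 5) 1) 3 3 (by omega) (by omega) (by decide +revert) (x := 4) (y := 4) (by omega) (by omega),
      z_apply_lo k (x := 4) (by omega) (by omega),
      u_apply k (x := 2*k+5+4) (y := 4) (by omega),
      D_apply k (j := 1) (x := 2*k+6+3) (y := 4) (by omega) (by omega),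
      A2_eval k (x := 4) (y := 4) (by omega)]
    · rw [u_apply k (x := 2*k+6+4) (y := 5) (by omega),
      C_fix k (x := 5) (by omega),
      B1_lo' k (swap (0:Fin 5) 1) 4 4 (by omega) (by omega) (by decide +revert) (x := 5) (y := 5) (by omega) (by omega),
      z_apply_lo k (x := 5) (by omega) (by omega),
      u_apply k (x := 2*k+5+5) (y := 5) (by omega),
      D_apply k (j := 2) (x := 2*k+6+4) (y := 5) (by omega) (by omega),
      A2_eval k (x := 5) (y := 5) (by omega)]
  · rw [u_fix k (x := 2*k+11+2*j) (by omega),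
      C_apply k hj (x := 2*k+11+2*j) (y := 2*k+12+2*j) (by omega),
      B1_fix k (swap (0:Fin 5) 1) (x := 2*k+12+2*j) (by omega),
      z_apply_mid k hj (x := 2*k+12+2*j) (y := 6+2*j) (by omega),
      u_fix k (x := 6+2*j) (by omega),
      D_apply k (j := 3+2*j) (x := 2*k+11+2*j) (y := 6+2*j) (by omega) (by omega),
      A2_eval k (x := 6+2*j) (y := 6+2*j) (by omega)]
  · rw [u_fix k (x := 2*k+12+2*j) (by omega),
      C_apply k hj (x := 2*k+12+2*j) (y := 2*k+11+2*j) (by omega),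
      B1_fix k (swap (0:Fin 5) 1) (x := 2*k+11+2*j) (by omega),
      z_apply_mid k hj (x := 2*k+11+2*j) (y := 7+2*j) (by omega),
      u_fix k (x := 7+2*j) (by omega),
      D_apply k (j := 4+2*j) (x := 2*k+12+2*j) (y := 7+2*j) (by omega) (by omega),
      A2_eval k (x := 7+2*j) (y := 7+2*j) (by omega)]
  · rw [u_fix k (x := x) (by omega),
      C_fix k (x := x) (by omega),
      B1_fix k (swap (0:Fin 5) 1) (x := x) (by omega),
      z_fix k (x := x) (by omega),
      u_fix k (x := x) (by omega),
      D_fix k (x := x) (by omega),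
      A2_eval k (x := x) (y := x) (by omega)]


def ga : Multiplicative (ZMod 2) × Perm (Fin 5) :=
  (Multiplicative.ofAdd (1 : ZMod 2), swap 0 1)

def gb : Multiplicative (ZMod 2) × Perm (Fin 5) := (1, swap 3 4)

def gc : Multiplicative (ZMod 2) × Perm (Fin 5) := (1, swap 0 2 * swap 1 3)

lemma top_eq :
    Subgroup.closure {ga, gb, gc} = (⊤ : Subgroup (Multiplicative (ZMod 2) × Perm (Fin 5))) := by
  have hga : ga ∈ Subgroup.closure {ga, gb, gc} :=
    Subgroup.subset_closure (Set.mem_insert _ _)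
  have hgb : gb ∈ Subgroup.closure {ga, gb, gc} :=
    Subgroup.subset_closure (Set.mem_insert_of_mem _ (Set.mem_insert _ _))
  have hgc : gc ∈ Subgroup.closure {ga, gb, gc} :=
    Subgroup.subset_closure (Set.mem_insert_of_mem _ (Set.mem_insert_of_mem _ rfl))
  have hz' : ((Multiplicative.ofAdd (1 : ZMod 2), 1) :
      Multiplicative (ZMod 2) × Perm (Fin 5)) ∈ Subgroup.closure {ga, gb, gc} :=
    (show ga * gc * gb * gc * ga * gc * gb * gc * ga * gc * gb * gc =
        ((Multiplicative.ofAdd (1 : ZMod 2), 1) :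
          Multiplicative (ZMod 2) × Perm (Fin 5)) from by decide) ▸
      (mul_mem (mul_mem (mul_mem (mul_mem (mul_mem (mul_mem (mul_mem (mul_mem (mul_mem (mul_mem (mul_mem (hga) hgc) hgb) hgc) hga) hgc) hgb) hgc) hga) hgc) hgb) hgc)
  have hsw : ∀ x y : Fin 5, ((1 : Multiplicative (ZMod 2)), swap x y) ∈
      Subgroup.closure {ga, gb, gc} := by
    intro x y
    fin_cases x <;> fin_cases y
    · exact (show (1 : Multiplicative (ZMod 2) × Perm (Fin 5)) =
          ((1 : Multiplicative (ZMod 2)), swap (0 : Fin 5) 0) from by decide) ▸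
          one_mem _
    · exact (show gc * gb * gc * ga * gc * gb * gc * ga * gc * gb * gc =
          ((1 : Multiplicative (ZMod 2)), swap (0 : Fin 5) 1) from by decide) ▸
          (mul_mem (mul_mem (mul_mem (mul_mem (mul_mem (mul_mem (mul_mem (mul_mem (mul_mem (mul_mem (hgc) hgb) hgc) hga) hgc) hgb) hgc) hga) hgc) hgb) hgc)
    · exact (show gb * gc * gb * gc * gb * gc =
          ((1 : Multiplicative (ZMod 2)), swap (0 : Fin 5) 2) from by decide) ▸
          (mul_mem (mul_mem (mul_mem (mul_mem (mul_mem (hgb) hgc) hgb) hgc) hgb) hgc)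
    · exact (show ga * gb * gc * gb * gc * ga * gb =
          ((1 : Multiplicative (ZMod 2)), swap (0 : Fin 5) 3) from by decide) ▸
          (mul_mem (mul_mem (mul_mem (mul_mem (mul_mem (mul_mem (hga) hgb) hgc) hgb) hgc) hga) hgb)
    · exact (show ga * gc * gb * gc * ga =
          ((1 : Multiplicative (ZMod 2)), swap (0 : Fin 5) 4) from by decide) ▸
          (mul_mem (mul_mem (mul_mem (mul_mem (hga) hgc) hgb) hgc) hga)
    · exact (show gc * gb * gc * ga * gc * gb * gc * ga * gc * gb * gc =
          ((1 : Multiplicative (ZMod 2)), swap (1 : Fin 5) 0) from by decide) ▸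
          (mul_mem (mul_mem (mul_mem (mul_mem (mul_mem (mul_mem (mul_mem (mul_mem (mul_mem (mul_mem (hgc) hgb) hgc) hga) hgc) hgb) hgc) hga) hgc) hgb) hgc)
    · exact (show (1 : Multiplicative (ZMod 2) × Perm (Fin 5)) =
          ((1 : Multiplicative (ZMod 2)), swap (1 : Fin 5) 1) from by decide) ▸
          one_mem _
    · exact (show ga * gb * gc * gb * gc * gb * gc * ga =
          ((1 : Multiplicative (ZMod 2)), swap (1 : Fin 5) 2) from by decide) ▸
          (mul_mem (mul_mem (mul_mem (mul_mem (mul_mem (mul_mem (mul_mem (hga) hgb) hgc) hgb) hgc) hgb) hgc) hga)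
    · exact (show gb * gc * gb * gc * gb =
          ((1 : Multiplicative (ZMod 2)), swap (1 : Fin 5) 3) from by decide) ▸
          (mul_mem (mul_mem (mul_mem (mul_mem (hgb) hgc) hgb) hgc) hgb)
    · exact (show gc * gb * gc =
          ((1 : Multiplicative (ZMod 2)), swap (1 : Fin 5) 4) from by decide) ▸
          (mul_mem (mul_mem (hgc) hgb) hgc)
    · exact (show gb * gc * gb * gc * gb * gc =
          ((1 : Multiplicative (ZMod 2)), swap (2 : Fin 5) 0) from by decide) ▸
          (mul_mem (mul_mem (mul_mem (mul_mem (mul_mem (hgb) hgc) hgb) hgc) hgb) hgc)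
    · exact (show ga * gb * gc * gb * gc * gb * gc * ga =
          ((1 : Multiplicative (ZMod 2)), swap (2 : Fin 5) 1) from by decide) ▸
          (mul_mem (mul_mem (mul_mem (mul_mem (mul_mem (mul_mem (mul_mem (hga) hgb) hgc) hgb) hgc) hgb) hgc) hga)
    · exact (show (1 : Multiplicative (ZMod 2) × Perm (Fin 5)) =
          ((1 : Multiplicative (ZMod 2)), swap (2 : Fin 5) 2) from by decide) ▸
          one_mem _
    · exact (show gb * gc * ga * gc * gb * gc * ga * gc * gb =
          ((1 : Multiplicative (ZMod 2)), swap (2 : Fin 5) 3) from by decide) ▸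
          (mul_mem (mul_mem (mul_mem (mul_mem (mul_mem (mul_mem (mul_mem (mul_mem (hgb) hgc) hga) hgc) hgb) hgc) hga) hgc) hgb)
    · exact (show gc * ga * gc * gb * gc * ga * gc =
          ((1 : Multiplicative (ZMod 2)), swap (2 : Fin 5) 4) from by decide) ▸
          (mul_mem (mul_mem (mul_mem (mul_mem (mul_mem (mul_mem (hgc) hga) hgc) hgb) hgc) hga) hgc)
    · exact (show ga * gb * gc * gb * gc * ga * gb =
          ((1 : Multiplicative (ZMod 2)), swap (3 : Fin 5) 0) from by decide) ▸
          (mul_mem (mul_mem (mul_mem (mul_mem (mul_mem (mul_mem (hga) hgb) hgc) hgb) hgc) hga) hgb)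
    · exact (show gb * gc * gb * gc * gb =
          ((1 : Multiplicative (ZMod 2)), swap (3 : Fin 5) 1) from by decide) ▸
          (mul_mem (mul_mem (mul_mem (mul_mem (hgb) hgc) hgb) hgc) hgb)
    · exact (show gb * gc * ga * gc * gb * gc * ga * gc * gb =
          ((1 : Multiplicative (ZMod 2)), swap (3 : Fin 5) 2) from by decide) ▸
          (mul_mem (mul_mem (mul_mem (mul_mem (mul_mem (mul_mem (mul_mem (mul_mem (hgb) hgc) hga) hgc) hgb) hgc) hga) hgc) hgb)
    · exact (show (1 : Multiplicative (ZMod 2) × Perm (Fin 5)) =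
          ((1 : Multiplicative (ZMod 2)), swap (3 : Fin 5) 3) from by decide) ▸
          one_mem _
    · exact (show gb =
          ((1 : Multiplicative (ZMod 2)), swap (3 : Fin 5) 4) from by decide) ▸
          (hgb)
    · exact (show ga * gc * gb * gc * ga =
          ((1 : Multiplicative (ZMod 2)), swap (4 : Fin 5) 0) from by decide) ▸
          (mul_mem (mul_mem (mul_mem (mul_mem (hga) hgc) hgb) hgc) hga)
    · exact (show gc * gb * gc =
          ((1 : Multiplicative (ZMod 2)), swap (4 : Fin 5) 1) from by decide) ▸
          (mul_mem (mul_mem (hgc) hgb) hgc)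
    · exact (show gc * ga * gc * gb * gc * ga * gc =
          ((1 : Multiplicative (ZMod 2)), swap (4 : Fin 5) 2) from by decide) ▸
          (mul_mem (mul_mem (mul_mem (mul_mem (mul_mem (mul_mem (hgc) hga) hgc) hgb) hgc) hga) hgc)
    · exact (show gb =
          ((1 : Multiplicative (ZMod 2)), swap (4 : Fin 5) 3) from by decide) ▸
          (hgb)
    · exact (show (1 : Multiplicative (ZMod 2) × Perm (Fin 5)) =
          ((1 : Multiplicative (ZMod 2)), swap (4 : Fin 5) 4) from by decide) ▸
          one_mem _
  have hσ : ∀ σ : Perm (Fin 5), ((1 : Multiplicative (ZMod 2)), σ) ∈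
      Subgroup.closure {ga, gb, gc} := by
    intro σ
    have hmem : σ ∈ Subgroup.closure {τ : Perm (Fin 5) | τ.IsSwap} := by
      rw [Perm.closure_isSwap]; exact Subgroup.mem_top σ
    refine Subgroup.closure_induction ?_ ?_ ?_ ?_ hmem
    · rintro τ ⟨a, b, hab, rfl⟩
      exact hsw a b
    · exact one_mem _
    · intro σ τ _ _ h1 h2
      exact mul_mem h1 h2
    · intro σ _ h1
      exact (show ((1 : Multiplicative (ZMod 2)), σ)⁻¹ = (1, σ⁻¹) from by
        rw [Prod.inv_mk, inv_one]) ▸ inv_mem h1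
  refine (Subgroup.eq_top_iff' _).mpr ?_
  rintro ⟨e, σ⟩
  have heq : ((e, σ) : Multiplicative (ZMod 2) × Perm (Fin 5)) =
      (e, (1 : Perm (Fin 5))) * (1, σ) := by
    rw [Prod.mk_mul_mk, mul_one, one_mul]
  rw [heq]
  refine mul_mem ?_ (hσ σ)
  rcases mult_zmod2_cases e with rfl | rfl
  · exact one_mem _
  · exact hz'

noncomputable def phi (k : ℕ) : Multiplicative (ZMod 2) × Perm (Fin 5) →* Perm ℕ :=
  ((MulAut.conj (u k)).toMonoidHom).comp (phi' k)

lemma phi_apply (k : ℕ) (g : Multiplicative (ZMod 2) × Perm (Fin 5)) :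
    phi k g = u k * phi' k g * (u k)⁻¹ := rfl

lemma phi_injective (k : ℕ) : Function.Injective (phi k) := fun a b hab =>
  phi'_injective k ((MulAut.conj (u k)).injective hab)

lemma range_phi (k : ℕ) :
    (phi k).range = Subgroup.closure {t2 (2*k+5), t3 (2*k+5), t4 (2*k+5)} := by
  rw [MonoidHom.range_eq_map, ← top_eq, MonoidHom.map_closure]
  congr 1
  rw [Set.image_insert_eq, Set.image_insert_eq, Set.image_singleton]
  rw [show phi k ga = t4 (2*k+5) from phi_a k, show phi k gb = t2 (2*k+5) from phi_b k,
    show phi k gc = t3 (2*k+5) from phi_c k]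
  rw [Set.insert_comm, Set.pair_comm]

end G234aux

/-- For odd `n ≥ 5`, `G₂₃₄ = ⟨t₂, t₃, t₄⟩` is isomorphic to `ℤ₂ × Sym(5)`. -/
theorem G234_iso (n : ℕ) (hn : 5 ≤ n) (hodd : Odd n) :
    Nonempty ((Subgroup.closure {t2 n, t3 n, t4 n} : Subgroup (Equiv.Perm ℕ)) ≃*
      (Multiplicative (ZMod 2) × Equiv.Perm (Fin 5))) := by
  obtain ⟨k, rfl⟩ : ∃ k, n = 2*k+5 := ⟨(n-5)/2, by
    obtain ⟨m, hm⟩ := hodd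
    omega⟩
  exact ⟨((MonoidHom.ofInjective (G234aux.phi_injective k)).trans
    (MulEquiv.subgroupCongr (G234aux.range_phi k))).symm⟩
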